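/- Let R_k be the quotient of the multivariate polynomial ring MvPolynomial (Fin k) (ZMod 2) by the ideal generated by the squares X(i)² of all the variables. Then for every element α of R_k: if α is a unit then α² = 1, and if α is not a unit then α² = 0. -/

import Mathlib

/-- The ring `R_k = 𝔽₂[u₁,…,u_k]/(uᵢ²)`. -/
abbrev Rk (k : ℕ) : Type :=
  MvPolynomial (Fin k) (ZMod 2) ⧸
    Ideal.span (Set.range fun i : Fin k => (MvPolynomial.X i : MvPolynomial (Fin k) (ZMod 2)) ^ 2)

theorem stmt8 (k : ℕ) (α : Rk k) :
    (IsUnit α → α ^ 2 = 1) ∧ (¬ IsUnit α → α ^ 2 = 0) := by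
  set I : Ideal (MvPolynomial (Fin k) (ZMod 2)) :=
    Ideal.span (Set.range fun i : Fin k =>
      (MvPolynomial.X i : MvPolynomial (Fin k) (ZMod 2)) ^ 2) with hI
  obtain ⟨p, rfl⟩ := Ideal.Quotient.mk_surjective α
  -- I is contained in the kernel of constantCoeff, hence proper
  have hker : I ≤ RingHom.ker (MvPolynomial.constantCoeff (σ := Fin k) (R := ZMod 2)) := by
    rw [hI, Ideal.span_le]
    rintro _ ⟨i, rfl⟩
    simp [RingHom.mem_ker]
  have hInetop : I ≠ ⊤ := by
    intro h
    have h1 : (1 : MvPolynomial (Fin k) (ZMod 2)) ∈ I := h ▸ Submodule.mem_top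
    have := hker h1
    simp [RingHom.mem_ker] at this
  haveI : Nontrivial (Rk k) := Ideal.Quotient.nontrivial_iff.mpr hInetop
  -- the key: squaring equals constant coefficient
  have key : ∀ q : MvPolynomial (Fin k) (ZMod 2),
      (Ideal.Quotient.mk I q) ^ 2
        = algebraMap (ZMod 2) (Rk k) (MvPolynomial.constantCoeff q) := by
    have hhom : ((Ideal.Quotient.mk I).comp
        (frobenius (MvPolynomial (Fin k) (ZMod 2)) 2))
        = (algebraMap (ZMod 2) (Rk k)).comp
            (MvPolynomial.constantCoeff (σ := Fin k) (R := ZMod 2)) := by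
      apply MvPolynomial.ringHom_ext
      · intro r
        have hr : r ^ 2 = r := by revert r; decide
        simp [frobenius_def, hr, ← MvPolynomial.C_pow,
          Ideal.Quotient.mk_algebraMap, IsScalarTower.algebraMap_apply
            (ZMod 2) (MvPolynomial (Fin k) (ZMod 2)) (Rk k)]
        rfl
      · intro i
        have hx : (MvPolynomial.X i : MvPolynomial (Fin k) (ZMod 2)) ^ 2 ∈ I := by
          rw [hI]
          exact Ideal.subset_span ⟨i, rfl⟩
        simp [frobenius_def, Ideal.Quotient.eq_zero_iff_mem.mpr hx]
    intro q
    have := RingHom.congr_fun hhom q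
    simpa [frobenius_def] using this
  have hc : MvPolynomial.constantCoeff p = 0 ∨ MvPolynomial.constantCoeff p = 1 :=
    (by decide : ∀ c : ZMod 2, c = 0 ∨ c = 1) _
  rcases hc with h | h
  · have h0 : (Ideal.Quotient.mk I p) ^ 2 = 0 := by rw [key, h, map_zero]
    exact ⟨fun hu => absurd h0 (hu.pow 2).ne_zero, fun _ => h0⟩
  · have h1 : (Ideal.Quotient.mk I p) ^ 2 = 1 := by rw [key, h, map_one]
    refine ⟨fun _ => h1, fun hnu => absurd ?_ hnu⟩
    exact IsUnit.of_mul_eq_one _ (by rw [← pow_two, h1])
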